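/- Let S be an n-simplex in R^n with maximal faces S^i, and let A^1,...,A^{n+1} be closed convex subsets of S with S^i ⊆ A^i and S \ ∪_i A^i ≠ ∅. With A^i_ε = {x ∈ S : dist(x, A^i) ≤ ε} and ε₀ = inf{ε : ∩_i A^i_ε ≠ ∅}, the set B = ∩_i A^i_{ε₀} is a single point v, and dist(v, A^i) = ε₀ for all i. -/

import Mathlib

open Metric Set
open scoped RealInnerProductSpace

variable {E : Type*} [NormedAddCommGroup E] [InnerProductSpace ℝ E] [FiniteDimensional ℝ E]

lemma sep_lemma (s : Finset E) (h : (0:E) ∉ convexHull ℝ (s : Set E)) :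
    ∃ u : E, ∀ z ∈ s, ⟪z, u⟫ < 0 := by
  obtain ⟨f, u₀, hf0, hfb⟩ := geometric_hahn_banach_point_closed
    (convex_convexHull ℝ _) (s.finite_toSet.isCompact_convexHull ℝ).isClosed h
  refine ⟨-((InnerProductSpace.toDual ℝ E).symm f), fun z hz => ?_⟩
  have h1 : u₀ < f z := hfb z (subset_convexHull ℝ _ hz)
  have h2 : (0:ℝ) < f z := lt_trans (by simpa using hf0) h1
  have h3 : ⟪(InnerProductSpace.toDual ℝ E).symm f, z⟫ = f z :=
    InnerProductSpace.toDual_symm_apply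
  rw [inner_neg_right, real_inner_comm, h3]
  linarith

lemma proj_lemma {A : Set E} (hc : IsClosed A) (hconv : Convex ℝ A) (hne : A.Nonempty)
    (x : E) : ∃ p ∈ A, dist x p = infDist x A ∧ ∀ c ∈ A, ⟪x - p, c - p⟫ ≤ 0 := by
  obtain ⟨p, hp, hd⟩ := hc.exists_infDist_eq_dist hne x
  refine ⟨p, hp, hd.symm, ?_⟩
  rw [← norm_eq_iInf_iff_real_inner_le_zero hconv hp]
  rw [← dist_eq_norm, ← hd, infDist_eq_iInf]
  congr 1; ext w; rw [dist_eq_norm]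

set_option maxHeartbeats 1000000 in
lemma claimA {n : ℕ} (b : AffineBasis (Fin (n+1)) ℝ (EuclideanSpace ℝ (Fin n)))
    (A : Fin (n+1) → Set (EuclideanSpace ℝ (Fin n)))
    (hAclosed : ∀ i, IsClosed (A i)) (hAconv : ∀ i, Convex ℝ (A i))
    (hAne : ∀ i, (A i).Nonempty)
    (hfaceMem : ∀ i x, (∀ k, 0 ≤ b.coord k x) → b.coord i x = 0 → x ∈ A i)
    (ε₀ : ℝ) (hpos : 0 < ε₀)
    (hinf : ∀ ε : ℝ, 0 ≤ ε →
      (⋂ i, {x | (∀ k, 0 ≤ b.coord k x) ∧ infDist x (A i) ≤ ε}).Nonempty → ε₀ ≤ ε)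
    (v : EuclideanSpace ℝ (Fin n)) (hvS : ∀ k, 0 ≤ b.coord k v)
    (hvB : ∀ i, infDist v (A i) ≤ ε₀) :
    ∀ i, infDist v (A i) = ε₀ := by
  classical
  by_contra hcon
  push_neg at hcon
  obtain ⟨i₀, hi₀⟩ := hcon
  have hd0 : infDist v (A i₀) < ε₀ := (hvB i₀).lt_of_ne hi₀
  -- projections
  have hproj : ∀ i, ∃ p ∈ A i, dist v p = infDist v (A i) ∧ ∀ c ∈ A i, ⟪v - p, c - p⟫ ≤ 0 :=
    fun i => proj_lemma (hAclosed i) (hAconv i) (hAne i) v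
  choose p hpA hpd hpvar using hproj
  set tight : Fin (n+1) → Prop := fun i => infDist v (A i) = ε₀ with htight_def
  have hvert : ∀ i k, k ≠ i → b k ∈ A i := by
    intro i k hk
    refine hfaceMem i (b k) (fun j => ?_) (b.coord_apply_ne (fun h => hk (h.symm)))
    rw [b.coord_apply]; split_ifs <;> norm_num
  have hcoord_sub : ∀ (i : Fin (n+1)) (x y : EuclideanSpace ℝ (Fin n)),
      b.coord i x - b.coord i y = (b.coord i).linear (x - y) := by
    intro i x y
    have h := (b.coord i).map_vadd y (x - y)
    simp only [vadd_eq_add, sub_add_cancel] at h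
    rw [h]; ring
  have htight_coord : ∀ i, tight i → 0 < b.coord i v := by
    intro i ht
    rcases (hvS i).eq_or_lt with h | h
    · exfalso
      have hv : v ∈ A i := hfaceMem i v hvS h.symm
      have h2 : infDist v (A i) = ε₀ := ht
      have h3 : infDist v (A i) = 0 := infDist_zero_of_mem hv
      rw [h3] at h2; linarith
    · exact h
  set z : Fin (n+1) → EuclideanSpace ℝ (Fin n) := fun i => v - p i with hz_def
  have hz_norm : ∀ i, tight i → ‖z i‖ = ε₀ := by
    intro i ht; rw [← dist_eq_norm, hpd i]; exact ht
  set L : Fin (n+1) → EuclideanSpace ℝ (Fin n) := fun i =>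
    (InnerProductSpace.toDual ℝ _).symm (LinearMap.toContinuousLinearMap (b.coord i).linear)
    with hL_def
  have hL : ∀ i q, ⟪L i, q⟫ = (b.coord i).linear q := by
    intro i q
    rw [hL_def]
    simp only [InnerProductSpace.toDual_symm_apply]
    simp
  set ζ : Fin (n+1) → EuclideanSpace ℝ (Fin n) := fun i => if tight i then z i else -(L i)
    with hζ_def
  set D : Finset (Fin (n+1)) := Finset.univ.filter (fun i => tight i ∨ b.coord i v = 0)
    with hD_def
  set φ : Fin (n+1) → EuclideanSpace ℝ (Fin n) → ℝ :=
    fun i x => if tight i then ⟪z i, x - p i⟫ else -(b.coord i x) with hφ_def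
  have hφlin : ∀ i x y, φ i x - φ i y = ⟪ζ i, x - y⟫ := by
    intro i x y
    by_cases ht : tight i
    · simp only [hφ_def, hζ_def, if_pos ht]
      rw [← inner_sub_right, sub_sub_sub_cancel_right]
    · simp only [hφ_def, hζ_def, if_neg ht]
      rw [inner_neg_left, hL, ← hcoord_sub]; ring
  have hφv_tight : ∀ i, tight i → φ i v = ε₀^2 := by
    intro i ht
    simp only [hφ_def, if_pos ht]
    have : v - p i = z i := rfl
    rw [this, real_inner_self_eq_norm_sq, hz_norm i ht]
  have hφvert_le : ∀ i k, (tight i → k ≠ i) → φ i (b k) ≤ 0 := by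
    intro i k h
    by_cases ht : tight i
    · simp only [hφ_def, if_pos ht]
      exact hpvar i (b k) (hvert i k (h ht))
    · simp only [hφ_def, if_neg ht, neg_nonpos]
      rw [b.coord_apply]; split_ifs <;> norm_num
  by_cases hc : (0 : EuclideanSpace ℝ (Fin n)) ∈ convexHull ℝ ((D.image ζ : Finset _) : Set (EuclideanSpace ℝ (Fin n)))
  · -- Case 1 : zero is a convex combination of the constraint gradients
    rw [convexHull_eq] at hc
    obtain ⟨ι, t, wt, zf, hw0, hw1, hmem, hcm⟩ := hc
    rw [t.centerMass_eq_of_sum_1 _ hw1] at hcm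
    have hkex : ∀ i : ι, ∃ j : Fin (n+1), i ∈ t → j ∈ D ∧ ζ j = zf i := by
      intro i
      by_cases hi : i ∈ t
      · obtain ⟨j, hjD, hjz⟩ := Finset.mem_image.mp (hmem i hi)
        exact ⟨j, fun _ => ⟨hjD, hjz⟩⟩
      · exact ⟨i₀, fun h => absurd h hi⟩
    choose k hk using hkex
    set F : EuclideanSpace ℝ (Fin n) → ℝ := fun x => ∑ i ∈ t, wt i * φ (k i) x with hF_def
    have hFconst : ∀ x y, F x = F y := by
      intro x y
      have hdiff : F x - F y = ⟪∑ i ∈ t, wt i • zf i, x - y⟫ := by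
        rw [sum_inner, hF_def, ← Finset.sum_sub_distrib]
        refine Finset.sum_congr rfl (fun i hi => ?_)
        rw [← mul_sub, hφlin, (hk i hi).2, real_inner_smul_left]
      rw [hcm, inner_zero_left] at hdiff
      linarith
    have hterm_nonneg : ∀ i ∈ t, 0 ≤ wt i * φ (k i) v := by
      intro i hi
      refine mul_nonneg (hw0 i hi) ?_
      by_cases ht : tight (k i)
      · rw [hφv_tight _ ht]; positivity
      · have hkD := (hk i hi).1
        rw [hD_def, Finset.mem_filter] at hkD
        have hk0 : b.coord (k i) v = 0 := hkD.2.resolve_left ht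
        simp only [hφ_def, if_neg ht, hk0, neg_zero, le_refl]
    have hFle : F (b i₀) ≤ 0 := by
      refine Finset.sum_nonpos (fun i hi => ?_)
      refine mul_nonpos_of_nonneg_of_nonpos (hw0 i hi) ?_
      refine hφvert_le (k i) i₀ (fun ht hki => ?_)
      exact hi₀ (by rw [hki]; exact ht)
    have hFv0 : F v = 0 := by
      refine le_antisymm ?_ (Finset.sum_nonneg hterm_nonneg)
      rw [hFconst v (b i₀)]; exact hFle
    have hterm0 : ∀ i ∈ t, wt i * φ (k i) v = 0 :=
      (Finset.sum_eq_zero_iff_of_nonneg hterm_nonneg).mp hFv0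
    obtain ⟨i₁, hi₁t, hi₁w⟩ : ∃ i ∈ t, wt i ≠ 0 :=
      Finset.exists_ne_zero_of_sum_ne_zero (hw1 ▸ one_ne_zero)
    have hw₁pos : 0 < wt i₁ := (hw0 i₁ hi₁t).lt_of_ne (Ne.symm hi₁w)
    have hk₁ : ¬ tight (k i₁) := by
      intro ht
      have h := hterm0 i₁ hi₁t
      rw [hφv_tight _ ht] at h
      exact absurd h (ne_of_gt (mul_pos hw₁pos (pow_pos hpos 2)))
    have hFk₁ : F (b (k i₁)) ≤ ∑ i ∈ t, (if i = i₁ then -wt i₁ else 0) := by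
      refine Finset.sum_le_sum (fun i hi => ?_)
      by_cases hii : i = i₁
      · subst hii
        rw [if_pos rfl]
        have : φ (k i) (b (k i)) = -1 := by
          simp only [hφ_def, if_neg hk₁, b.coord_apply_eq]
        rw [this]; ring_nf; exact le_refl _
      · rw [if_neg hii]
        refine mul_nonpos_of_nonneg_of_nonpos (hw0 i hi) ?_
        refine hφvert_le (k i) (k i₁) (fun ht hkk => ?_)
        exact hk₁ (by rw [hkk]; exact ht)
    rw [Finset.sum_ite_eq' t i₁ (fun _ => -wt i₁)] at hFk₁
    rw [if_pos hi₁t] at hFk₁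
    have := hFconst (b (k i₁)) v
    rw [hFv0] at this
    linarith
  · -- Case 2 : separation gives an improving direction
    obtain ⟨u, hu⟩ := sep_lemma _ hc
    have huD : ∀ i ∈ D, ⟪ζ i, u⟫ < 0 := fun i hi => hu _ (Finset.mem_image_of_mem ζ hi)
    have hDmem : ∀ i, tight i ∨ b.coord i v = 0 → i ∈ D := by
      intro i hi; rw [hD_def, Finset.mem_filter]; exact ⟨Finset.mem_univ i, hi⟩
    have hζu_tight : ∀ i, tight i → ⟪z i, u⟫ < 0 := by
      intro i ht
      have h := huD i (hDmem i (Or.inl ht))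
      simp only [hζ_def] at h
      rwa [if_pos ht] at h
    have hζu_zero : ∀ i, b.coord i v = 0 → 0 < (b.coord i).linear u := by
      intro i h0
      have hnt : ¬ tight i := fun ht => (htight_coord i ht).ne' h0
      have h := huD i (hDmem i (Or.inr h0))
      simp only [hζ_def] at h
      rw [if_neg hnt] at h
      rw [inner_neg_left, neg_lt_zero] at h
      rwa [hL] at h
    -- find improving point; first handle the case of no tight index
    by_cases htex : ∃ i, tight i
    case neg =>
      push_neg at htex
      have hlt : ∀ i, infDist v (A i) < ε₀ := fun i => (hvB i).lt_of_ne (htex i)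
      have h1 : ε₀ ≤ Finset.univ.sup' ⟨i₀, Finset.mem_univ i₀⟩ (fun i => infDist v (A i)) := by
        refine hinf _ (le_trans infDist_nonneg
          (Finset.le_sup' (fun i => infDist v (A i)) (Finset.mem_univ i₀))) ?_
        exact ⟨v, Set.mem_iInter.mpr fun i =>
          ⟨hvS, Finset.le_sup' (fun j => infDist v (A j)) (Finset.mem_univ i)⟩⟩
      have h2 : Finset.univ.sup' ⟨i₀, Finset.mem_univ i₀⟩ (fun i => infDist v (A i)) < ε₀ :=
        (Finset.sup'_lt_iff ⟨i₀, Finset.mem_univ i₀⟩).mpr fun i _ => hlt i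
      linarith
    case pos =>
      obtain ⟨it, hit⟩ := htex
      have hune : u ≠ 0 := by
        intro hu0
        have := hζu_tight it hit
        rw [hu0, inner_zero_right] at this
        exact lt_irrefl 0 this
      have hnu : 0 < ‖u‖ := norm_pos_iff.mpr hune
      obtain ⟨t0, ht0pos, ht0coord, ht0tight, ht0slack⟩ :
          ∃ t : ℝ, 0 < t ∧
            (∀ i, b.coord i v ≠ 0 → (b.coord i).linear u < 0 →
              t * (-(b.coord i).linear u) ≤ b.coord i v) ∧
            (∀ i, tight i → t * ‖u‖^2 ≤ -⟪z i, u⟫) ∧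
            (∀ i, ¬ tight i → t * (‖u‖ + 1) ≤ ε₀ - infDist v (A i)) := by
        classical
        set θ : Fin (n+1) → ℝ := fun i =>
          min (if b.coord i v = 0 then 1 else
                (if (b.coord i).linear u < 0 then b.coord i v / (-(b.coord i).linear u) else 1))
              (if tight i then (-⟪z i, u⟫) / ‖u‖^2
               else (ε₀ - infDist v (A i)) / (‖u‖ + 1)) with hθ_def
        have hθpos : ∀ i, 0 < θ i := by
          intro i
          refine lt_min ?_ ?_
          · split_ifs with h1 h2
            · norm_num
            · have hc0 : 0 < b.coord i v := (hvS i).lt_of_ne (Ne.symm h1)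
              exact div_pos hc0 (by linarith)
            · norm_num
          · split_ifs with h1
            · exact div_pos (by linarith [hζu_tight i h1]) (by positivity)
            · have : infDist v (A i) < ε₀ := (hvB i).lt_of_ne h1
              exact div_pos (by linarith) (by linarith)
        have hθle : ∀ i, Finset.univ.inf' ⟨i₀, Finset.mem_univ i₀⟩ θ ≤
            min (if b.coord i v = 0 then 1 else
                (if (b.coord i).linear u < 0 then b.coord i v / (-(b.coord i).linear u) else 1))
              (if tight i then (-⟪z i, u⟫) / ‖u‖^2
               else (ε₀ - infDist v (A i)) / (‖u‖ + 1)) :=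
          fun i => Finset.inf'_le _ (Finset.mem_univ i)
        refine ⟨Finset.univ.inf' ⟨i₀, Finset.mem_univ i₀⟩ θ,
          (Finset.lt_inf'_iff ⟨i₀, Finset.mem_univ i₀⟩).mpr fun i _ => hθpos i, ?_, ?_, ?_⟩
        · intro i h0 hlin
          have h := (hθle i).trans (min_le_left _ _)
          rw [if_neg h0, if_pos hlin] at h
          have h2 : 0 < -(b.coord i).linear u := by linarith
          rw [le_div_iff₀ h2] at h
          linarith
        · intro i ht
          have h := (hθle i).trans (min_le_right _ _)
          rw [if_pos ht] at h
          rw [le_div_iff₀ (by positivity : (0:ℝ) < ‖u‖^2)] at h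
          linarith
        · intro i ht
          have h := (hθle i).trans (min_le_right _ _)
          rw [if_neg ht] at h
          rw [le_div_iff₀ (by linarith : (0:ℝ) < ‖u‖ + 1)] at h
          linarith
      set x' : EuclideanSpace ℝ (Fin n) := v + t0 • u with hx'_def
      have hcoordx : ∀ k, b.coord k x' = b.coord k v + t0 * (b.coord k).linear u := by
        intro k
        have h := hcoord_sub k x' v
        rw [hx'_def] at h ⊢
        have h2 : v + t0 • u - v = t0 • u := by abel
        rw [h2] at h
        rw [map_smul, smul_eq_mul] at h
        linarith
      have hxS : ∀ k, 0 ≤ b.coord k x' := by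
        intro k
        rw [hcoordx]
        by_cases hk0 : b.coord k v = 0
        · have := hζu_zero k hk0
          rw [hk0, zero_add]
          positivity
        · have hkv : 0 < b.coord k v := (hvS k).lt_of_ne (Ne.symm hk0)
          by_cases hlin : (b.coord k).linear u < 0
          · have h1 := ht0coord k hk0 hlin
            nlinarith
          · push_neg at hlin
            nlinarith
      have hxdist : ∀ i, infDist x' (A i) < ε₀ := by
        intro i
        by_cases ht : tight i
        · have hzu := hζu_tight i ht
          have hle : infDist x' (A i) ≤ dist x' (p i) := infDist_le_dist_of_mem (hpA i)
          have hdist : dist x' (p i) = ‖z i + t0 • u‖ := by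
            rw [dist_eq_norm, hx'_def, hz_def]
            congr 1
            exact add_sub_right_comm _ _ _
          have hsq : ‖z i + t0 • u‖^2 = ε₀^2 + 2*t0*⟪z i, u⟫ + t0^2*‖u‖^2 := by
            rw [norm_add_sq_real, real_inner_smul_right, norm_smul, hz_norm i ht]
            rw [Real.norm_eq_abs, abs_of_pos ht0pos]
            ring
          have hmul : t0 * ‖u‖^2 ≤ -⟪z i, u⟫ := ht0tight i ht
          have hsqlt : ‖z i + t0 • u‖^2 < ε₀^2 := by nlinarith
          have : dist x' (p i) < ε₀ := by
            rw [hdist]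
            nlinarith [norm_nonneg (z i + t0 • u)]
          linarith
        · have hd : infDist v (A i) < ε₀ := (hvB i).lt_of_ne ht
          have hθ2 : t0 * (‖u‖ + 1) ≤ ε₀ - infDist v (A i) := ht0slack i ht
          have h1 : infDist x' (A i) ≤ infDist v (A i) + dist x' v :=
            infDist_le_infDist_add_dist
          have h2 : dist x' v = t0 * ‖u‖ := by
            rw [hx'_def, dist_eq_norm]
            have : v + t0 • u - v = t0 • u := by abel
            rw [this, norm_smul, Real.norm_eq_abs, abs_of_pos ht0pos]
          nlinarith
      have h1 : ε₀ ≤ Finset.univ.sup' ⟨i₀, Finset.mem_univ i₀⟩ (fun i => infDist x' (A i)) := by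
        refine hinf _ (le_trans infDist_nonneg
          (Finset.le_sup' (fun i => infDist x' (A i)) (Finset.mem_univ i₀))) ?_
        exact ⟨x', Set.mem_iInter.mpr fun i =>
          ⟨hxS, Finset.le_sup' (fun j => infDist x' (A j)) (Finset.mem_univ i)⟩⟩
      have h2 : Finset.univ.sup' ⟨i₀, Finset.mem_univ i₀⟩ (fun i => infDist x' (A i)) < ε₀ :=
        (Finset.sup'_lt_iff ⟨i₀, Finset.mem_univ i₀⟩).mpr fun i _ => hxdist i
      linarith

set_option maxHeartbeats 1000000 in
lemma uniq_lemma {n : ℕ} (b : AffineBasis (Fin (n+1)) ℝ (EuclideanSpace ℝ (Fin n)))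
    (A : Fin (n+1) → Set (EuclideanSpace ℝ (Fin n)))
    (hAclosed : ∀ i, IsClosed (A i)) (hAconv : ∀ i, Convex ℝ (A i))
    (hAne : ∀ i, (A i).Nonempty)
    (hfaceMem : ∀ i x, (∀ k, 0 ≤ b.coord k x) → b.coord i x = 0 → x ∈ A i)
    (ε₀ : ℝ) (hpos : 0 < ε₀)
    (hB : ∀ x : EuclideanSpace ℝ (Fin n), (∀ k, 0 ≤ b.coord k x) →
      (∀ i, infDist x (A i) ≤ ε₀) → ∀ i, infDist x (A i) = ε₀)
    (v w : EuclideanSpace ℝ (Fin n))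
    (hvS : ∀ k, 0 ≤ b.coord k v) (hvB : ∀ i, infDist v (A i) ≤ ε₀)
    (hwS : ∀ k, 0 ≤ b.coord k w) (hwB : ∀ i, infDist w (A i) ≤ ε₀)
    (hne : v ≠ w) : False := by
  classical
  set u : EuclideanSpace ℝ (Fin n) := w - v with hu_def
  have hune : u ≠ 0 := sub_ne_zero.mpr (Ne.symm hne)
  have hnu : 0 < ‖u‖ := norm_pos_iff.mpr hune
  have hcoord_sub : ∀ (i : Fin (n+1)) (x y : EuclideanSpace ℝ (Fin n)),
      b.coord i x - b.coord i y = (b.coord i).linear (x - y) := by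
    intro i x y
    have h := (b.coord i).map_vadd y (x - y)
    simp only [vadd_eq_add, sub_add_cancel] at h
    rw [h]; ring
  have hcoordline : ∀ (k : Fin (n+1)) (s : ℝ), b.coord k (v + s • u) =
      (1 - s) * b.coord k v + s * b.coord k w := by
    intro k s
    have h := hcoord_sub k (v + s • u) v
    have h2 : v + s • u - v = s • u := by abel
    rw [h2, map_smul, smul_eq_mul] at h
    have h3 := hcoord_sub k w v
    rw [hu_def] at h ⊢
    rw [← h3] at h
    linarith
  -- projections at v and w
  have hprojv : ∀ i, ∃ p ∈ A i, dist v p = infDist v (A i) ∧ ∀ c ∈ A i, ⟪v - p, c - p⟫ ≤ 0 :=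
    fun i => proj_lemma (hAclosed i) (hAconv i) (hAne i) v
  have hprojw : ∀ i, ∃ p ∈ A i, dist w p = infDist w (A i) ∧ ∀ c ∈ A i, ⟪w - p, c - p⟫ ≤ 0 :=
    fun i => proj_lemma (hAclosed i) (hAconv i) (hAne i) w
  choose pv hpvA hpvd _ using hprojv
  choose pw hpwA hpwd _ using hprojw
  have hseg : ∀ s : ℝ, 0 ≤ s → s ≤ 1 →
      (∀ k, 0 ≤ b.coord k (v + s • u)) ∧ (∀ i, infDist (v + s • u) (A i) ≤ ε₀) := by
    intro s h0 h1
    constructor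
    · intro k
      rw [hcoordline]
      nlinarith [hvS k, hwS k]
    · intro i
      have hcand : (1 - s) • pv i + s • pw i ∈ A i :=
        (hAconv i) (hpvA i) (hpwA i) (by linarith) h0 (by ring)
      have hd : infDist (v + s • u) (A i) ≤ dist (v + s • u) ((1 - s) • pv i + s • pw i) :=
        infDist_le_dist_of_mem hcand
      have heq : v + s • u - ((1 - s) • pv i + s • pw i)
          = (1 - s) • (v - pv i) + s • (w - pw i) := by
        rw [hu_def]
        module
      have hnle : dist (v + s • u) ((1 - s) • pv i + s • pw i)
          ≤ (1 - s) * dist v (pv i) + s * dist w (pw i) := by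
        rw [dist_eq_norm, heq, dist_eq_norm, dist_eq_norm]
        refine (norm_add_le _ _).trans ?_
        rw [norm_smul, norm_smul, Real.norm_eq_abs, Real.norm_eq_abs,
          abs_of_nonneg (by linarith : (0:ℝ) ≤ 1 - s), abs_of_nonneg h0]
      have h3 : (1 - s) * dist v (pv i) + s * dist w (pw i) ≤ ε₀ := by
        have := hpvd i; have := hpwd i
        nlinarith [hvB i, hwB i, hpvd i, hpwd i]
      linarith
  have hallε : ∀ s : ℝ, 0 ≤ s → s ≤ 1 → ∀ i, infDist (v + s • u) (A i) = ε₀ :=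
    fun s h0 h1 => hB _ (hseg s h0 h1).1 (hseg s h0 h1).2
  set m : EuclideanSpace ℝ (Fin n) := v + (1/2 : ℝ) • u with hm_def
  have hprojm : ∀ i, ∃ p ∈ A i, dist m p = infDist m (A i) ∧ ∀ c ∈ A i, ⟪m - p, c - p⟫ ≤ 0 :=
    fun i => proj_lemma (hAclosed i) (hAconv i) (hAne i) m
  choose p hpA hpd hpvar using hprojm
  have hdm : ∀ i, dist m (p i) = ε₀ := by
    intro i
    rw [hpd i, hm_def]
    exact hallε (1/2) (by norm_num) (by norm_num) i
  have hperp : ∀ i, ⟪m - p i, u⟫ = 0 := by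
    intro i
    have key : ∀ s : ℝ, 0 < s → s ≤ 1/2 → |⟪m - p i, u⟫| ≤ s * ‖u‖^2 / 2 := by
      intro s hs hs2
      have hplus : ε₀ ≤ dist (m + s • u) (p i) := by
        have h1 : infDist (m + s • u) (A i) = ε₀ := by
          have : m + s • u = v + (1/2 + s) • u := by rw [hm_def]; module
          rw [this]
          exact hallε (1/2 + s) (by linarith) (by linarith) i
        rw [← h1]
        exact infDist_le_dist_of_mem (hpA i)
      have hminus : ε₀ ≤ dist (m - s • u) (p i) := by
        have h1 : infDist (m - s • u) (A i) = ε₀ := by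
          have : m - s • u = v + (1/2 - s) • u := by rw [hm_def]; module
          rw [this]
          exact hallε (1/2 - s) (by linarith) (by linarith) i
        rw [← h1]
        exact infDist_le_dist_of_mem (hpA i)
      have hplus' : dist (m + s • u) (p i) = ‖(m - p i) + s • u‖ := by
        rw [dist_eq_norm]; congr 1; abel
      have hminus' : dist (m - s • u) (p i) = ‖(m - p i) - s • u‖ := by
        rw [dist_eq_norm]; congr 1; abel
      have hsq1 : ‖(m - p i) + s • u‖^2 = ε₀^2 + 2*s*⟪m - p i, u⟫ + s^2*‖u‖^2 := by
        rw [norm_add_sq_real, real_inner_smul_right, norm_smul, Real.norm_eq_abs,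
          abs_of_pos hs, ← dist_eq_norm, hdm i]
        ring
      have hsq2 : ‖(m - p i) - s • u‖^2 = ε₀^2 - 2*s*⟪m - p i, u⟫ + s^2*‖u‖^2 := by
        rw [norm_sub_sq_real, real_inner_smul_right, norm_smul, Real.norm_eq_abs,
          abs_of_pos hs, ← dist_eq_norm, hdm i]
        ring
      have h1 : ε₀^2 ≤ ‖(m - p i) + s • u‖^2 := by
        have := hplus
        rw [hplus'] at this
        nlinarith
      have h2 : ε₀^2 ≤ ‖(m - p i) - s • u‖^2 := by
        have := hminus
        rw [hminus'] at this
        nlinarith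
      rw [hsq1] at h1
      rw [hsq2] at h2
      rw [abs_le]
      constructor <;> nlinarith
    by_contra hc0
    have habs : 0 < |⟪m - p i, u⟫| := abs_pos.mpr hc0
    have hnu2 : 0 < ‖u‖^2 := by positivity
    have hs : 0 < min (1/2 : ℝ) (|⟪m - p i, u⟫| / ‖u‖^2) :=
      lt_min (by norm_num) (div_pos habs hnu2)
    have := key _ hs (min_le_left _ _)
    have h2 : min (1/2 : ℝ) (|⟪m - p i, u⟫| / ‖u‖^2) * ‖u‖^2 ≤ |⟪m - p i, u⟫| := by
      have := min_le_right (1/2 : ℝ) (|⟪m - p i, u⟫| / ‖u‖^2)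
      rw [← le_div_iff₀ hnu2]
      exact this
    nlinarith
  have hmS : ∀ k, 0 ≤ b.coord k m := by
    intro k
    rw [hm_def]
    exact (hseg (1/2) (by norm_num) (by norm_num)).1 k
  have hmpos : ∀ k, 0 < b.coord k m := by
    intro k
    rcases (hmS k).eq_or_lt with h | h
    · exfalso
      have hmA : m ∈ A k := hfaceMem k m hmS h.symm
      have h0 : infDist m (A k) = 0 := infDist_zero_of_mem hmA
      have h1 : dist m (p k) = ε₀ := hdm k
      rw [hpd k, h0] at h1
      linarith
    · exact h
  -- exit point of the line in direction u
  set c : Fin (n+1) → ℝ := fun k => (b.coord k).linear u with hc_def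
  have hcoordm : ∀ (k : Fin (n+1)) (s : ℝ), b.coord k (m + s • u) = b.coord k m + s * c k := by
    intro k s
    have h := hcoord_sub k (m + s • u) m
    have h2 : m + s • u - m = s • u := by abel
    rw [h2, map_smul, smul_eq_mul] at h
    linarith
  have hsumc : ∑ k, c k = 0 := by
    have h1 := b.sum_coord_apply_eq_one (m + (1:ℝ) • u)
    have h2 := b.sum_coord_apply_eq_one m
    have h3 : ∑ k, (b.coord k m + 1 * c k) = 1 := by
      calc ∑ k, (b.coord k m + 1 * c k)
          = ∑ k, b.coord k (m + (1:ℝ) • u) :=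
            Finset.sum_congr rfl fun k _ => (hcoordm k (1:ℝ)).symm
        _ = 1 := h1
    rw [Finset.sum_add_distrib, h2] at h3
    simpa using h3
  have hcex : ∃ k, c k ≠ 0 := by
    by_contra hall
    push_neg at hall
    have heq : ∀ k, b.coord k (m + (1:ℝ) • u) = b.coord k m := by
      intro k; rw [hcoordm, hall]; ring
    have h4 : m + (1:ℝ) • u = m := b.ext_elem heq
    rw [one_smul] at h4
    exact hune (add_eq_left.mp h4)
  have hneg : ∃ k, c k < 0 := by
    by_contra hall
    push_neg at hall
    have hz : ∀ k ∈ Finset.univ, c k = 0 :=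
      (Finset.sum_eq_zero_iff_of_nonneg (fun k _ => hall k)).mp hsumc
    obtain ⟨k, hk⟩ := hcex
    exact hk (hz k (Finset.mem_univ k))
  obtain ⟨k₀, hk₀⟩ := hneg
  have hR : k₀ ∈ Finset.univ.filter (fun k => c k < 0) :=
    Finset.mem_filter.mpr ⟨Finset.mem_univ k₀, hk₀⟩
  obtain ⟨j, hjR, hjmin⟩ := Finset.exists_min_image
    (Finset.univ.filter (fun k => c k < 0)) (fun k => b.coord k m / (-(c k))) ⟨k₀, hR⟩
  have hcj : c j < 0 := (Finset.mem_filter.mp hjR).2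
  have htstar : 0 < b.coord j m / (-(c j)) := div_pos (hmpos j) (by linarith)
  set tstar : ℝ := b.coord j m / (-(c j)) with htstar_def
  set y : EuclideanSpace ℝ (Fin n) := m + tstar • u with hy_def
  have hycoord : ∀ k, b.coord k y = b.coord k m + tstar * c k := fun k => hcoordm k tstar
  have hyS : ∀ k, 0 ≤ b.coord k y := by
    intro k
    rw [hycoord]
    by_cases hk : c k < 0
    · have hmem : k ∈ Finset.univ.filter (fun k => c k < 0) :=
        Finset.mem_filter.mpr ⟨Finset.mem_univ k, hk⟩
      have h1 : tstar ≤ b.coord k m / (-(c k)) := hjmin k hmem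
      rw [le_div_iff₀ (by linarith : (0:ℝ) < -(c k))] at h1
      nlinarith
    · push_neg at hk
      nlinarith [hmpos k, htstar]
  have hyj : b.coord j y = 0 := by
    rw [hycoord, htstar_def]
    have hcj0 : c j ≠ 0 := ne_of_lt hcj
    have h5 : b.coord j m / (-(c j)) * c j = -(b.coord j m) := by
      rw [div_neg, neg_mul, div_mul_cancel₀ _ hcj0]
    linarith
  have hyA : y ∈ A j := hfaceMem j y hyS hyj
  have hvar : ⟪m - p j, y - p j⟫ ≤ 0 := hpvar j y hyA
  have hcomp : ⟪m - p j, y - p j⟫ = ε₀^2 := by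
    have h1 : y - p j = (m - p j) + tstar • u := by rw [hy_def]; abel
    rw [h1, inner_add_right, real_inner_smul_right, hperp j,
      real_inner_self_eq_norm_sq, ← dist_eq_norm, hdm j]
    ring
  rw [hcomp] at hvar
  nlinarith

set_option maxHeartbeats 1000000 in
lemma cone_lemma {n : ℕ} (b : AffineBasis (Fin (n+1)) ℝ (EuclideanSpace ℝ (Fin n)))
    (A : Fin (n+1) → Set (EuclideanSpace ℝ (Fin n)))
    (hAconv : ∀ i, Convex ℝ (A i))
    (hvert : ∀ i k, k ≠ i → b k ∈ A i)
    (q : EuclideanSpace ℝ (Fin n)) (hqco : ∀ k, 0 ≤ b.coord k q) (hqU : ∀ i, q ∉ A i)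
    (x : EuclideanSpace ℝ (Fin n)) (hxco : ∀ k, 0 ≤ b.coord k x) (hx : ∀ i, x ∈ A i) :
    False := by
  classical
  have hμsum : ∑ k, b.coord k x = 1 := b.sum_coord_apply_eq_one x
  have hlqsum : ∑ k, b.coord k q = 1 := b.sum_coord_apply_eq_one q
  obtain ⟨k₀, -, hk₀⟩ : ∃ k ∈ Finset.univ, b.coord k x ≠ 0 :=
    Finset.exists_ne_zero_of_sum_ne_zero (hμsum ▸ one_ne_zero)
  have hRne : (Finset.univ.filter (fun k => 0 < b.coord k x)).Nonempty :=
    ⟨k₀, Finset.mem_filter.mpr ⟨Finset.mem_univ k₀, (hxco k₀).lt_of_ne (Ne.symm hk₀)⟩⟩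
  obtain ⟨i, hiR, himin⟩ := Finset.exists_min_image
    (Finset.univ.filter (fun k => 0 < b.coord k x))
    (fun k => b.coord k q / b.coord k x) hRne
  have hμi : 0 < b.coord i x := (Finset.mem_filter.mp hiR).2
  set s : ℝ := b.coord i q / b.coord i x with hs_def
  have hs0 : 0 ≤ s := div_nonneg (hqco i) (le_of_lt hμi)
  have hsμi : s * b.coord i x = b.coord i q := div_mul_cancel₀ _ (ne_of_gt hμi)
  have hs1 : s ≤ 1 := by
    by_contra hcon
    push_neg at hcon
    have hlt : ∀ k ∈ Finset.univ.filter (fun k => 0 < b.coord k x),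
        b.coord k x < b.coord k q := by
      intro k hk
      have hμk : 0 < b.coord k x := (Finset.mem_filter.mp hk).2
      have h1 : s ≤ b.coord k q / b.coord k x := himin k hk
      rw [le_div_iff₀ hμk] at h1
      nlinarith
    have h1 : ∑ k ∈ Finset.univ.filter (fun k => 0 < b.coord k x), b.coord k x = 1 := by
      rw [← hμsum]
      refine Finset.sum_subset (Finset.subset_univ _) (fun k _ hk => ?_)
      simp only [Finset.mem_filter, Finset.mem_univ, true_and, not_lt] at hk
      exact le_antisymm hk (hxco k)
    have h2 : ∑ k ∈ Finset.univ.filter (fun k => 0 < b.coord k x), b.coord k q ≤ 1 := by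
      rw [← hlqsum]
      exact Finset.sum_le_sum_of_subset_of_nonneg (Finset.subset_univ _)
        (fun k _ _ => hqco k)
    have h3 := Finset.sum_lt_sum_of_nonempty hRne hlt
    linarith
  set W : Fin (n+1) → ℝ := fun k => if k = i then s else b.coord k q - s * b.coord k x
    with hW_def
  set Pt : Fin (n+1) → EuclideanSpace ℝ (Fin n) := fun k => if k = i then x else b k
    with hPt_def
  have hWi : W i = s := by rw [hW_def]; exact if_pos rfl
  have hWne : ∀ k, k ≠ i → W k = b.coord k q - s * b.coord k x := by
    intro k hk; rw [hW_def]; exact if_neg hk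
  have hPti : Pt i = x := by rw [hPt_def]; exact if_pos rfl
  have hPtne : ∀ k, k ≠ i → Pt k = b k := by
    intro k hk; rw [hPt_def]; exact if_neg hk
  have hW0 : ∀ k, 0 ≤ W k := by
    intro k
    by_cases hk : k = i
    · rw [hk, hWi]; exact hs0
    · rw [hWne k hk]
      by_cases hμk : 0 < b.coord k x
      · have h1 : s ≤ b.coord k q / b.coord k x :=
          himin k (Finset.mem_filter.mpr ⟨Finset.mem_univ k, hμk⟩)
        rw [le_div_iff₀ hμk] at h1
        linarith
      · have h0 : b.coord k x = 0 := le_antisymm (not_lt.mp hμk) (hxco k)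
        rw [h0]
        have := hqco k
        linarith
  have hq_split : b.coord i q + ∑ k ∈ Finset.univ.erase i, b.coord k q = 1 := by
    have h : b.coord i q + ∑ k ∈ Finset.univ.erase i, b.coord k q = ∑ k, b.coord k q :=
      Finset.add_sum_erase Finset.univ (fun k => b.coord k q) (Finset.mem_univ i)
    rw [h, hlqsum]
  have hx_split : b.coord i x + ∑ k ∈ Finset.univ.erase i, b.coord k x = 1 := by
    have h : b.coord i x + ∑ k ∈ Finset.univ.erase i, b.coord k x = ∑ k, b.coord k x :=
      Finset.add_sum_erase Finset.univ (fun k => b.coord k x) (Finset.mem_univ i)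
    rw [h, hμsum]
  have hWsum : ∑ k, W k = 1 := by
    have h : W i + ∑ k ∈ Finset.univ.erase i, W k = ∑ k, W k :=
      Finset.add_sum_erase Finset.univ W (Finset.mem_univ i)
    rw [← h, hWi]
    have he : ∑ k ∈ Finset.univ.erase i, W k
        = ∑ k ∈ Finset.univ.erase i, (b.coord k q - s * b.coord k x) :=
      Finset.sum_congr rfl (fun k hk => hWne k (Finset.mem_erase.mp hk).1)
    rw [he, Finset.sum_sub_distrib, ← Finset.mul_sum]
    nlinarith [hsμi, hq_split, hx_split]
  have hxrep : ∑ k, b.coord k x • b k = x := b.linear_combination_coord_eq_self x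
  have hqrep : ∑ k, b.coord k q • b k = q := b.linear_combination_coord_eq_self q
  have hcomb : ∑ k, W k • Pt k = q := by
    have h : W i • Pt i + ∑ k ∈ Finset.univ.erase i, W k • Pt k = ∑ k, W k • Pt k :=
      Finset.add_sum_erase Finset.univ (fun k => W k • Pt k) (Finset.mem_univ i)
    rw [← h, hWi, hPti]
    have he : ∑ k ∈ Finset.univ.erase i, W k • Pt k
        = ∑ k ∈ Finset.univ.erase i, (b.coord k q - s * b.coord k x) • b k :=
      Finset.sum_congr rfl (fun k hk => by
        rw [hWne k (Finset.mem_erase.mp hk).1, hPtne k (Finset.mem_erase.mp hk).1])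
    rw [he]
    have hsx : s • x = s • (b.coord i x • b i)
        + ∑ k ∈ Finset.univ.erase i, s • (b.coord k x • b k) := by
      have h2 : s • (b.coord i x • b i) + ∑ k ∈ Finset.univ.erase i, s • (b.coord k x • b k)
          = ∑ k, s • (b.coord k x • b k) :=
        Finset.add_sum_erase Finset.univ (fun k => s • (b.coord k x • b k)) (Finset.mem_univ i)
      rw [h2, ← Finset.smul_sum, hxrep]
    rw [hsx, add_assoc, ← Finset.sum_add_distrib]
    have hk2 : ∑ k ∈ Finset.univ.erase i,
        (s • (b.coord k x • b k) + (b.coord k q - s * b.coord k x) • b k)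
        = ∑ k ∈ Finset.univ.erase i, b.coord k q • b k :=
      Finset.sum_congr rfl (fun k _ => by
        rw [smul_smul, ← add_smul]
        congr 1
        ring)
    rw [hk2, smul_smul, hsμi]
    have h3 : b.coord i q • b i + ∑ k ∈ Finset.univ.erase i, b.coord k q • b k
        = ∑ k, b.coord k q • b k :=
      Finset.add_sum_erase Finset.univ (fun k => b.coord k q • b k) (Finset.mem_univ i)
    rw [h3, hqrep]
  have hqA : q ∈ A i := by
    rw [← hcomb]
    refine Convex.sum_mem (hAconv i) (fun k _ => hW0 k) hWsum (fun k _ => ?_)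
    by_cases hk : k = i
    · rw [hk, hPti]; exact hx i
    · rw [hPtne k hk]; exact hvert i k hk
  exact hqU i hqA

set_option maxHeartbeats 1000000 in
theorem stmt_5 (n : ℕ) (a : Fin (n + 1) → EuclideanSpace ℝ (Fin n))
    (ha : AffineIndependent ℝ a)
    (S : Set (EuclideanSpace ℝ (Fin n))) (hS : S = convexHull ℝ (Set.range a))
    (face : Fin (n + 1) → Set (EuclideanSpace ℝ (Fin n)))
    (hface : ∀ i, face i = convexHull ℝ (a '' {j | j ≠ i}))
    (A : Fin (n + 1) → Set (EuclideanSpace ℝ (Fin n)))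
    (hAclosed : ∀ i, IsClosed (A i)) (hAconv : ∀ i, Convex ℝ (A i))
    (hAS : ∀ i, A i ⊆ S) (hfaceA : ∀ i, face i ⊆ A i)
    (hnc : (S \ ⋃ i, A i).Nonempty)
    (ε₀ : ℝ)
    (hε₀ : ε₀ = sInf {ε : ℝ | 0 ≤ ε ∧ (⋂ i, {x ∈ S | Metric.infDist x (A i) ≤ ε}).Nonempty}) :
    ∃ v : EuclideanSpace ℝ (Fin n),
      (⋂ i, {x ∈ S | Metric.infDist x (A i) ≤ ε₀}) = {v} ∧
      ∀ i, Metric.infDist v (A i) = ε₀ := by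
  classical
  obtain ⟨q, hqS, hqU⟩ := hnc
  have hqU' : ∀ i, q ∉ A i := fun i hi => hqU (Set.mem_iUnion.mpr ⟨i, hi⟩)
  rcases Nat.eq_zero_or_pos n with hn0 | hnpos
  · -- degenerate case n = 0
    subst hn0
    have hSsing : S = {a 0} := by
      rw [hS]
      have h1 : Set.range a = {a 0} := by
        ext y
        simp only [Set.mem_range, Set.mem_singleton_iff]
        constructor
        · rintro ⟨i, rfl⟩
          have h2 : i = 0 := by
            have h3 := i.isLt
            apply Fin.ext
            simp only [Fin.val_zero]
            omega
          rw [h2]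
        · intro h
          exact ⟨0, h.symm⟩
      rw [h1, convexHull_singleton]
    have hq0 : q = a 0 := by rwa [hSsing, Set.mem_singleton_iff] at hqS
    have hAempty : ∀ i, A i = ∅ := by
      intro i
      rw [Set.eq_empty_iff_forall_notMem]
      intro x hx
      have hx0 : x = a 0 := by
        have := hAS i hx
        rwa [hSsing, Set.mem_singleton_iff] at this
      exact hqU' i (by rwa [hq0, ← hx0])
    have hd : ∀ (x : EuclideanSpace ℝ (Fin 0)) i, infDist x (A i) = 0 := by
      intro x i; rw [hAempty i, Metric.infDist_empty]
    have hEeq : {ε : ℝ | 0 ≤ ε ∧ (⋂ i, {x ∈ S | infDist x (A i) ≤ ε}).Nonempty}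
        = Set.Ici (0:ℝ) := by
      ext ε
      simp only [Set.mem_setOf_eq, Set.mem_Ici]
      constructor
      · exact fun h => h.1
      · intro h
        exact ⟨h, ⟨a 0, Set.mem_iInter.mpr fun i =>
          ⟨by rw [hSsing]; exact Set.mem_singleton _, by rw [hd]; exact h⟩⟩⟩
    have hε0 : ε₀ = 0 := by rw [hε₀, hEeq, csInf_Ici]
    refine ⟨a 0, ?_, fun i => by rw [hd, hε0]⟩
    ext x
    simp only [Set.mem_iInter, Set.mem_setOf_eq, Set.mem_singleton_iff]
    constructor
    · intro h
      have := (h 0).1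
      rwa [hSsing, Set.mem_singleton_iff] at this
    · intro h
      intro i
      refine ⟨by rw [hSsing, Set.mem_singleton_iff]; exact h, ?_⟩
      rw [hd, hε0]
  · -- main case n ≥ 1
    have htop : affineSpan ℝ (Set.range a) = ⊤ := by
      rw [ha.affineSpan_eq_top_iff_card_eq_finrank_add_one]
      simp [finrank_euclideanSpace_fin]
    set b : AffineBasis (Fin (n+1)) ℝ (EuclideanSpace ℝ (Fin n)) := ⟨a, ha, htop⟩ with hb_def
    have hba : ⇑b = a := rfl
    have hrange : Set.range ⇑b = Set.range a := by rw [hba]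
    have hSco : ∀ x, x ∈ S ↔ ∀ k, 0 ≤ b.coord k x := by
      intro x
      rw [hS, ← hrange, b.convexHull_eq_nonneg_coord]
      exact Iff.rfl
    have hfaceMem : ∀ i x, (∀ k, 0 ≤ b.coord k x) → b.coord i x = 0 → x ∈ A i := by
      intro i x hx h0
      refine hfaceA i ?_
      rw [hface i]
      have hxrep : ∑ k, b.coord k x • b k = x := b.linear_combination_coord_eq_self x
      have hzero : b.coord i x • b i = 0 := by rw [h0, zero_smul]
      have hxrep' : ∑ k ∈ Finset.univ.erase i, b.coord k x • b k = x := by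
        rw [Finset.sum_erase (f := fun k => b.coord k x • b k) Finset.univ hzero]
        exact hxrep
      have hsum' : ∑ k ∈ Finset.univ.erase i, b.coord k x = 1 := by
        rw [Finset.sum_erase (f := fun k => b.coord k x) Finset.univ h0]
        exact b.sum_coord_apply_eq_one x
      rw [← hxrep']
      refine Convex.sum_mem (convex_convexHull ℝ _) (fun k _ => hx k) hsum' (fun k hk => ?_)
      refine subset_convexHull ℝ _ ?_
      exact ⟨k, (Finset.mem_erase.mp hk).1, by rw [hba]⟩
    have hvert : ∀ i k, k ≠ i → a k ∈ A i := by
      intro i k hk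
      have h := hfaceMem i (b k) (fun j => by
          rw [b.coord_apply]; split_ifs <;> norm_num)
        (b.coord_apply_ne (fun h => hk h.symm))
      rwa [hba] at h
    have hAne : ∀ i, (A i).Nonempty := by
      intro i
      rcases eq_or_ne i 0 with h | h
      · refine ⟨a ⟨1, by omega⟩, hvert i _ ?_⟩
        rw [h]
        intro hc
        have := congrArg Fin.val hc
        simp at this
      · exact ⟨a 0, hvert i 0 (Ne.symm h)⟩
    have hScomp : IsCompact S := by
      rw [hS]; exact (Set.finite_range a).isCompact_convexHull ℝ
    have hSclosed : IsClosed S := hScomp.isClosed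
    have ha0S : a 0 ∈ S := by rw [hS]; exact subset_convexHull ℝ _ (Set.mem_range_self 0)
    -- the family of candidate sets
    have hmono : ∀ ε ε' : ℝ, ε ≤ ε' →
        (⋂ i, {x ∈ S | infDist x (A i) ≤ ε}) ⊆ ⋂ i, {x ∈ S | infDist x (A i) ≤ ε'} := by
      intro ε ε' hle x hx
      rw [Set.mem_iInter] at hx ⊢
      exact fun i => ⟨(hx i).1, le_trans (hx i).2 hle⟩
    have hEbdd : BddBelow {ε : ℝ | 0 ≤ ε ∧ (⋂ i, {x ∈ S | infDist x (A i) ≤ ε}).Nonempty} :=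
      ⟨0, fun ε h => h.1⟩
    have hEne : {ε : ℝ | 0 ≤ ε ∧ (⋂ i, {x ∈ S | infDist x (A i) ≤ ε}).Nonempty}.Nonempty := by
      refine ⟨Finset.univ.sup' ⟨0, Finset.mem_univ 0⟩ (fun i => infDist (a 0) (A i)),
        le_trans infDist_nonneg
          (Finset.le_sup' (fun i => infDist (a 0) (A i)) (Finset.mem_univ 0)), ?_⟩
      exact ⟨a 0, Set.mem_iInter.mpr fun i =>
        ⟨ha0S, Finset.le_sup' (fun j => infDist (a 0) (A j)) (Finset.mem_univ i)⟩⟩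
    have hε₀nonneg : 0 ≤ ε₀ := by
      rw [hε₀]
      exact le_csInf hEne fun ε h => h.1
    -- B is nonempty
    have hPclosed : ∀ ε : ℝ, IsClosed (⋂ i, {x ∈ S | infDist x (A i) ≤ ε}) := by
      intro ε
      refine isClosed_iInter fun i => ?_
      have : {x ∈ S | infDist x (A i) ≤ ε} = S ∩ {x | infDist x (A i) ≤ ε} := rfl
      rw [this]
      exact hSclosed.inter (isClosed_le (continuous_infDist_pt (A i)) continuous_const)
    have hPsub : ∀ ε : ℝ, (⋂ i, {x ∈ S | infDist x (A i) ≤ ε}) ⊆ S :=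
      fun ε x hx => (Set.mem_iInter.mp hx 0).1
    have hBne : (⋂ i, {x ∈ S | infDist x (A i) ≤ ε₀}).Nonempty := by
      set V : ℕ → Set (EuclideanSpace ℝ (Fin n)) :=
        fun m => ⋂ i, {x ∈ S | infDist x (A i) ≤ ε₀ + 1/(m+1)} with hV_def
      have hV : ∀ m : ℕ, (V m).Nonempty := by
        intro m
        have hpos : (0:ℝ) < 1/((m:ℝ)+1) := by positivity
        have hlt : sInf {ε : ℝ | 0 ≤ ε ∧ (⋂ i, {x ∈ S | infDist x (A i) ≤ ε}).Nonempty}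
            < ε₀ + 1/((m:ℝ)+1) := by rw [← hε₀]; linarith
        obtain ⟨ε, hεE, hεlt⟩ := (csInf_lt_iff hEbdd hEne).mp hlt
        exact hεE.2.mono (hmono ε _ (le_of_lt hεlt))
      have hdec : ∀ m : ℕ, V (m+1) ⊆ V m := by
        intro m
        rw [hV_def]
        refine hmono _ _ ?_
        have h1 : (0:ℝ) < (m:ℝ) + 1 := by positivity
        have h2 : ((m:ℝ) + 1) ≤ ((m:ℝ) + 1) + 1 := by linarith
        have h3 := one_div_le_one_div_of_le h1 h2
        push_cast
        linarith
      have key := IsCompact.nonempty_iInter_of_sequence_nonempty_isCompact_isClosed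
        V hdec hV (hScomp.of_isClosed_subset (hPclosed _) (hPsub _))
        (fun m => hPclosed _)
      obtain ⟨x, hx⟩ := key
      rw [Set.mem_iInter] at hx
      have hx' : ∀ (m : ℕ) (i : Fin (n+1)), x ∈ S ∧ infDist x (A i) ≤ ε₀ + 1/(m+1) := by
        intro m i
        have := hx m
        rw [hV_def] at this
        exact Set.mem_iInter.mp this i
      refine ⟨x, Set.mem_iInter.mpr fun i => ?_⟩
      refine ⟨(hx' 0 i).1, ?_⟩
      refine le_of_forall_pos_le_add fun η hη => ?_
      obtain ⟨m, hm⟩ := exists_nat_one_div_lt hη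
      calc infDist x (A i) ≤ ε₀ + 1/(m+1) := (hx' m i).2
        _ ≤ ε₀ + η := by push_cast at hm ⊢; linarith
    -- ε₀ is positive
    have hqco : ∀ k, 0 ≤ b.coord k q := (hSco q).mp hqS
    have hε₀pos : 0 < ε₀ := by
      rcases hε₀nonneg.eq_or_lt with h | h
      · exfalso
        obtain ⟨x, hx⟩ := hBne
        rw [Set.mem_iInter] at hx
        have hxA : ∀ i, x ∈ A i := by
          intro i
          have h1 : infDist x (A i) ≤ 0 := by
            have := (hx i).2; rwa [← h] at this
          have h2 : infDist x (A i) = 0 := le_antisymm h1 infDist_nonneg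
          exact ((hAclosed i).mem_iff_infDist_zero (hAne i)).mpr h2
        have hvertb : ∀ i k, k ≠ i → b k ∈ A i := by
          intro i k hk; rw [hba]; exact hvert i k hk
        exact cone_lemma b A hAconv hvertb q hqco hqU' x ((hSco x).mp (hx 0).1) hxA
      · exact h
    have hinf' : ∀ ε : ℝ, 0 ≤ ε →
        (⋂ i, {x | (∀ k, 0 ≤ b.coord k x) ∧ infDist x (A i) ≤ ε}).Nonempty → ε₀ ≤ ε := by
      intro ε h0 hne'
      rw [hε₀]
      refine csInf_le hEbdd ⟨h0, ?_⟩
      obtain ⟨x, hx⟩ := hne'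
      rw [Set.mem_iInter] at hx
      exact ⟨x, Set.mem_iInter.mpr fun i => ⟨(hSco x).mpr (hx i).1, (hx i).2⟩⟩
    have hclaim : ∀ x : EuclideanSpace ℝ (Fin n), (∀ k, 0 ≤ b.coord k x) →
        (∀ i, infDist x (A i) ≤ ε₀) → ∀ i, infDist x (A i) = ε₀ :=
      fun x hx1 hx2 => claimA b A hAclosed hAconv hAne hfaceMem ε₀ hε₀pos hinf' x hx1 hx2
    obtain ⟨v, hv⟩ := hBne
    have hvmem := Set.mem_iInter.mp hv
    have hvS : v ∈ S := (hvmem 0).1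
    have hvco : ∀ k, 0 ≤ b.coord k v := (hSco v).mp hvS
    have hvB : ∀ i, infDist v (A i) ≤ ε₀ := fun i => (hvmem i).2
    refine ⟨v, ?_, hclaim v hvco hvB⟩
    ext x
    simp only [Set.mem_singleton_iff]
    constructor
    · intro hx
      have hxmem := Set.mem_iInter.mp hx
      have hxco : ∀ k, 0 ≤ b.coord k x := (hSco x).mp (hxmem 0).1
      have hxB : ∀ i, infDist x (A i) ≤ ε₀ := fun i => (hxmem i).2
      by_contra hxv
      exact uniq_lemma b A hAclosed hAconv hAne hfaceMem ε₀ hε₀pos hclaim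
        x v hxco hxB hvco hvB hxv
    · rintro rfl
      exact hv
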